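/- Let g, ω ∈ ℝ and define P : ℝ → Matrix (Fin 2) (Fin 2) ℝ by P t = !![ω(t−1)² − g²(t−1)³/3, ω(t−1) − g²(t−1)²/2; ω(t−1) − g²(t−1)²/2, g²(1−t) + ω]. Then P satisfies the terminal condition P 1 = !![0, 0; 0, ω], and for every t ∈ ℝ, P has derivative A * P t + P t * Aᵀ − !![0, 0; 0, g²] at t, where A = !![0, 1; 0, 0]. That is, P solves the Lyapunov equation Ṗ = AP + PAᵀ − ggᵀ for the double-integrator system with constant noise vector g = (0, g). -/

import Mathlib

open Matrix

/-- The explicit matrix function `P` satisfies the terminal condition `P 1 = !![0,0;0,ω]`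
and solves (entrywise) the Lyapunov equation `Ṗ = A P + P Aᵀ − g gᵀ` for the
double-integrator drift `A = !![0,1;0,0]` and noise vector `(0, g)`. -/
theorem lyapunov_solution_double_integrator
    (g ω : ℝ) (P : ℝ → Matrix (Fin 2) (Fin 2) ℝ)
    (hP : ∀ t, P t =
      !![ω * (t - 1) ^ 2 - g ^ 2 * (t - 1) ^ 3 / 3, ω * (t - 1) - g ^ 2 * (t - 1) ^ 2 / 2;
         ω * (t - 1) - g ^ 2 * (t - 1) ^ 2 / 2, g ^ 2 * (1 - t) + ω]) :
    P 1 = !![0, 0; 0, ω] ∧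
    ∀ t : ℝ, ∀ i j : Fin 2,
      HasDerivAt (fun s => P s i j)
        (((!![0, 1; 0, 0] : Matrix (Fin 2) (Fin 2) ℝ) * P t
          + P t * (!![0, 1; 0, 0] : Matrix (Fin 2) (Fin 2) ℝ)ᵀ
          - !![0, 0; 0, g ^ 2]) i j) t := by
  constructor
  · rw [hP]; norm_num
  · intro t i j
    have hd : HasDerivAt (fun s : ℝ => s - 1) 1 t := (hasDerivAt_id t).sub_const 1
    have hd' : HasDerivAt (fun s : ℝ => 1 - s) (-1) t := by
      exact (hasDerivAt_id t).const_sub 1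
    simp only [hP]
    fin_cases i <;> fin_cases j <;>
      simp [Matrix.mul_apply, Fin.sum_univ_two]
    · have := ((hd.pow 2).const_mul ω).sub (((hd.pow 3).const_mul (g ^ 2)).div_const 3)
      exact this.congr_deriv (by simp [Matrix.vecMul, dotProduct, Fin.sum_univ_two, Matrix.vecHead, Matrix.vecTail] <;> ring)
    · have := (hd.const_mul ω).sub (((hd.pow 2).const_mul (g ^ 2)).div_const 2)
      exact this.congr_deriv (by simp [Matrix.vecMul, dotProduct, Fin.sum_univ_two, Matrix.vecHead, Matrix.vecTail] <;> ring)
    · have := (hd.const_mul ω).sub (((hd.pow 2).const_mul (g ^ 2)).div_const 2)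
      exact this.congr_deriv (by simp [Matrix.vecMul, dotProduct, Fin.sum_univ_two, Matrix.vecHead, Matrix.vecTail] <;> ring)
    · have := hd'.const_mul (g ^ 2)
      exact this.congr_deriv (by simp [Matrix.vecMul, dotProduct, Fin.sum_univ_two, Matrix.vecHead, Matrix.vecTail] <;> ring)
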